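/- Regard R as a left (R,P_Ω)-module over itself via left multiplication, with operators P_Ω. Then (R,P_Ω) is the restricted free left (R,P_Ω)-module on a singleton set: for every left (R,P_Ω)-module (M,𝔪_Ω) and every element m ∈ MC(M), there exists a unique left (R,P_Ω)-module homomorphism f : R → M with f(1_R) = m. -/
import Mathlib


/-- `(R, P_Ω)`, regarded as a left module over itself via left
multiplication with operators `P_Ω`, is the restricted free left `(R, P_Ω)`-module on a
singleton: for every left `(R, P_Ω)`-module `(M, 𝔪_Ω)` and every module constant
`m ∈ MC(M)` there is a unique left `(R, P_Ω)`-module homomorphism `f : R → M` with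
`f 1 = m`. -/
theorem self_is_restricted_free_multiple_rota_baxter_module_on_singleton
    (k : Type*) [CommRing k]
    (R : Type*) [Ring R] [Algebra k R]
    (Ω : Type*) [Nonempty Ω]
    (lam : Ω → k)
    (P : Ω → R →ₗ[k] R)
    (hP : ∀ (α β : Ω) (r₁ r₂ : R),
      P α r₁ * P β r₂ =
        P α (r₁ * P β r₂) + P β (P α r₁ * r₂)
          + lam β • P α (r₁ * r₂) + lam α • P β (r₁ * r₂))
    (M : Type*) [AddCommGroup M] [Module k M] [Module R M] [IsScalarTower k R M]
    (mOp : Ω → M →ₗ[k] M)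
    (hM : ∀ (α β : Ω) (x : R) (m : M),
      P α x • mOp β m =
        mOp α (x • mOp β m) + mOp β (P α x • m)
          + lam β • mOp α (x • m) + lam α • mOp β (x • m))
    (m : M)
    (hm : ∀ (r : R) (ω : Ω), mOp ω (r • m) = P ω r • m) :
    ∃! f : R →ₗ[R] M,
      (∀ (ω : Ω) (r : R), f (P ω r) = mOp ω (f r)) ∧ f 1 = m := by
  refine ⟨{ toFun := fun r => r • m,
            map_add' := fun a b => add_smul a b m,
            map_smul' := fun a b => mul_smul a b m }, ⟨?_, one_smul R m⟩, ?_⟩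
  · intro ω r
    simpa using (hm r ω).symm
  · rintro g ⟨_, hg1⟩
    apply LinearMap.ext; intro r
    have := g.map_smul r 1
    simp only [smul_eq_mul, mul_one] at this
    simp [this, hg1]
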